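/- There exists a unique continuous function f^α : Δ → ℝ satisfying the self-referential functional equation f^α(u_i(t)) = f(u_i(t)) + α_i·(f^α(t) − b(t)) for all t ∈ Δ and all i ∈ {1,2,3}. -/

import Mathlib

noncomputable section

/-- The three vertices of the (unit) Sierpiński gasket:
`x₁ = (0,0)`, `x₂ = (1,0)`, `x₃ = (1/2, √3/2)`. -/
def sgPt : Fin 3 → ℝ × ℝ := ![(0, 0), (1, 0), (1/2, Real.sqrt 3 / 2)]

/-- The three contraction maps `u_i(t) = (t + x_i)/2` generating the Sierpiński gasket. -/
def sgMap (i : Fin 3) (t : ℝ × ℝ) : ℝ × ℝ := (1/2 : ℝ) • (t + sgPt i)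

lemma sgMap_eq (i : Fin 3) (t : ℝ × ℝ) :
    sgMap i t = ((t.1 + (sgPt i).1)/2, (t.2 + (sgPt i).2)/2) := by
  simp [sgMap, Prod.ext_iff, Prod.smul_fst, Prod.smul_snd, smul_eq_mul]
  constructor <;> ring

lemma sgMap_inj (i : Fin 3) {t s : ℝ × ℝ} (h : sgMap i t = sgMap i s) : t = s := by
  rw [sgMap_eq, sgMap_eq, Prod.ext_iff] at h
  rw [Prod.ext_iff]
  obtain ⟨h1, h2⟩ := h
  exact ⟨by linarith, by linarith⟩

lemma sgMap_fix (i : Fin 3) : sgMap i (sgPt i) = sgPt i := by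
  rw [sgMap_eq, Prod.ext_iff]
  constructor <;> ring

lemma sg_le (Δ : Set (ℝ × ℝ)) [CompactSpace Δ] (hne : Δ.Nonempty)
    (hΔ : Δ = ⋃ i : Fin 3, sgMap i '' Δ)
    (ψ : ℝ × ℝ → ℝ) (hψ : Continuous ψ)
    (hmid : ∀ i t, ψ (sgMap i t) = (ψ t + ψ (sgPt i)) / 2)
    (c : ℝ) (hc : ∀ i, ψ (sgPt i) ≤ c) :
    ∀ p ∈ Δ, ψ p ≤ c := by
  have hcom : IsCompact Δ := isCompact_iff_compactSpace.mpr ‹_›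
  obtain ⟨p₀, hp₀, hmax⟩ := hcom.exists_isMaxOn hne hψ.continuousOn
  have hM : ψ p₀ ≤ c := by
    have h1 : p₀ ∈ ⋃ i : Fin 3, sgMap i '' Δ := hΔ ▸ hp₀
    simp only [Set.mem_iUnion, Set.mem_image] at h1
    obtain ⟨i, t, ht, hti⟩ := h1
    have h2 : ψ p₀ = (ψ t + ψ (sgPt i)) / 2 := by rw [← hti, hmid]
    have h3' : ψ t ≤ ψ p₀ := hmax ht
    have h4 := hc i
    linarith
  intro p hp; exact le_trans (hmax hp) hM

lemma sg_lin_le (Δ : Set (ℝ × ℝ)) [CompactSpace Δ] (hne : Δ.Nonempty)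
    (hΔ : Δ = ⋃ i : Fin 3, sgMap i '' Δ) (c1 c2 c : ℝ)
    (hc : ∀ i, c1 * (sgPt i).1 + c2 * (sgPt i).2 ≤ c) :
    ∀ p ∈ Δ, c1 * p.1 + c2 * p.2 ≤ c := by
  refine sg_le Δ hne hΔ (fun p => c1 * p.1 + c2 * p.2) (by fun_prop) ?_ c hc
  intro i t
  rw [sgMap_eq]
  dsimp only
  ring

lemma sg_bounds (Δ : Set (ℝ × ℝ)) [CompactSpace Δ] (hne : Δ.Nonempty)
    (hΔ : Δ = ⋃ i : Fin 3, sgMap i '' Δ) :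
    ∀ p ∈ Δ, (0 ≤ p.2 ∧ p.2 ≤ Real.sqrt 3 / 2) ∧
      (0 ≤ Real.sqrt 3 * p.1 + p.2 ∧ Real.sqrt 3 * p.1 + p.2 ≤ Real.sqrt 3) ∧
      (-Real.sqrt 3 ≤ -Real.sqrt 3 * p.1 + p.2 ∧ -Real.sqrt 3 * p.1 + p.2 ≤ 0) := by
  set q := Real.sqrt 3 with hqdef
  have hq0 : 0 ≤ q := Real.sqrt_nonneg 3
  have h1 := sg_lin_le Δ hne hΔ 0 (-1) 0 (by intro i; fin_cases i <;> simp [sgPt] <;> linarith)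
  have h2 := sg_lin_le Δ hne hΔ 0 1 (q/2) (by intro i; fin_cases i <;> simp [sgPt] <;> linarith)
  have h3 := sg_lin_le Δ hne hΔ (-q) (-1) 0 (by intro i; fin_cases i <;> simp [sgPt] <;> linarith)
  have h4 := sg_lin_le Δ hne hΔ q 1 q (by intro i; fin_cases i <;> simp [sgPt] <;> linarith)
  have h5 := sg_lin_le Δ hne hΔ q (-1) q (by intro i; fin_cases i <;> simp [sgPt] <;> linarith)
  have h6 := sg_lin_le Δ hne hΔ (-q) 1 0 (by intro i; fin_cases i <;> simp [sgPt] <;> linarith)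
  intro p hp
  have g1 := h1 p hp; have g2 := h2 p hp; have g3 := h3 p hp
  have g4 := h4 p hp; have g5 := h5 p hp; have g6 := h6 p hp
  refine ⟨⟨by linarith, by linarith⟩, ⟨by linarith, by linarith⟩, by linarith, by linarith⟩

lemma sg_overlap (Δ : Set (ℝ × ℝ)) [CompactSpace Δ] (hne : Δ.Nonempty)
    (hΔ : Δ = ⋃ i : Fin 3, sgMap i '' Δ) :
    ∀ (i j : Fin 3) (t s : ℝ × ℝ), t ∈ Δ → s ∈ Δ → i ≠ j →
      sgMap i t = sgMap j s → t = sgPt j ∧ s = sgPt i := by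
  have hb := sg_bounds Δ hne hΔ
  have hq : (0:ℝ) < Real.sqrt 3 := Real.sqrt_pos.mpr (by norm_num)
  set q := Real.sqrt 3 with hqdef
  have hdiv : ∀ u v : ℝ, q * u = q * v → u = v :=
    fun u v huv => mul_left_cancel₀ (ne_of_gt hq) huv
  intro i j t s ht hs hij heq
  rw [sgMap_eq, sgMap_eq, Prod.ext_iff] at heq
  obtain ⟨e1, e2⟩ := heq
  have e1' : t.1 + (sgPt i).1 = s.1 + (sgPt j).1 := by dsimp only at e1; linarith
  have e2' : t.2 + (sgPt i).2 = s.2 + (sgPt j).2 := by dsimp only at e2; linarith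
  clear e1 e2
  obtain ⟨⟨b1t, b2t⟩, ⟨b3t, b4t⟩, ⟨b5t, b6t⟩⟩ := hb t ht
  obtain ⟨⟨b1s, b2s⟩, ⟨b3s, b4s⟩, ⟨b5s, b6s⟩⟩ := hb s hs
  fin_cases i <;> fin_cases j
  · exact absurd rfl hij
  · -- i = 0, j = 1 : t = (1,0), s = (0,0)
    norm_num [sgPt, Prod.ext_iff] at e1' e2' ⊢
    have m1 : q * t.1 = q * s.1 + (q) := by linear_combination q * e1'
    have hs2 : s.2 = 0 := le_antisymm (by linarith) b1s
    have hs1 : s.1 = 0 := hdiv s.1 0 (by linarith)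
    exact ⟨⟨by linarith, by linarith⟩, by linarith, by linarith⟩
  · -- i = 0, j = 2 : t = (1/2, q/2), s = (0,0)
    norm_num [sgPt, Prod.ext_iff] at e1' e2' ⊢
    have m1 : q * t.1 = q * s.1 + (q/2) := by linear_combination q * e1'
    have hs2 : s.2 = 0 := le_antisymm (by linarith) b1s
    have hs1 : s.1 = 0 := hdiv s.1 0 (by linarith)
    exact ⟨⟨by linarith, by linarith⟩, by linarith, by linarith⟩
  · -- i = 1, j = 0 : t = (0,0), s = (1,0)
    norm_num [sgPt, Prod.ext_iff] at e1' e2' ⊢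
    have m1 : q * t.1 = q * s.1 + (-q) := by linear_combination q * e1'
    have ht2 : t.2 = 0 := le_antisymm (by linarith) b1t
    have ht1 : t.1 = 0 := hdiv t.1 0 (by linarith)
    exact ⟨⟨by linarith, by linarith⟩, by linarith, by linarith⟩
  · exact absurd rfl hij
  · -- i = 1, j = 2 : t = (1/2, q/2), s = (1, 0)
    norm_num [sgPt, Prod.ext_iff] at e1' e2' ⊢
    have m1 : q * t.1 = q * s.1 + (-(q/2)) := by linear_combination q * e1'
    have hs2 : s.2 = 0 := le_antisymm (by linarith) b1s
    have ht2 : t.2 = q/2 := by linarith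
    have hs1 : s.1 = 1 := hdiv s.1 1 (by linarith)
    have ht1 : t.1 = 1/2 := hdiv t.1 (1/2) (by linarith)
    exact ⟨⟨by linarith, by linarith⟩, by linarith, by linarith⟩
  · -- i = 2, j = 0 : t = (0,0), s = (1/2, q/2)
    norm_num [sgPt, Prod.ext_iff] at e1' e2' ⊢
    have m1 : q * t.1 = q * s.1 + (-(q/2)) := by linear_combination q * e1'
    have ht2 : t.2 = 0 := le_antisymm (by linarith) b1t
    have ht1 : t.1 = 0 := hdiv t.1 0 (by linarith)
    exact ⟨⟨by linarith, by linarith⟩, by linarith, by linarith⟩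
  · -- i = 2, j = 1 : t = (1,0), s = (1/2, q/2)
    norm_num [sgPt, Prod.ext_iff] at e1' e2' ⊢
    have m1 : q * t.1 = q * s.1 + (q/2) := by linear_combination q * e1'
    have ht2 : t.2 = 0 := le_antisymm (by linarith) b1t
    have hs2 : s.2 = q/2 := by linarith
    have ht1 : t.1 = 1 := hdiv t.1 1 (by linarith)
    have hs1 : s.1 = 1/2 := hdiv s.1 (1/2) (by linarith)
    exact ⟨⟨by linarith, by linarith⟩, by linarith, by linarith⟩
  · exact absurd rfl hij

/-- There exists a unique continuous `f^α : Δ → ℝ` satisfying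
`f^α(u_i(t)) = f(u_i(t)) + α_i (f^α(t) - b(t))` for all `t ∈ Δ` and `i ∈ {1,2,3}`. -/
theorem sg_alpha_fractal_existsUnique
    (Δ : Set (ℝ × ℝ)) [CompactSpace Δ] (hne : Δ.Nonempty)
    (hΔ : Δ = ⋃ i : Fin 3, sgMap i '' Δ)
    (hmaps : ∀ i : Fin 3, Set.MapsTo (sgMap i) Δ Δ)
    (hx : ∀ i : Fin 3, sgPt i ∈ Δ)
    (f b : C(Δ, ℝ))
    (hfb : ∀ i : Fin 3, b ⟨sgPt i, hx i⟩ = f ⟨sgPt i, hx i⟩)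
    (a : Fin 3 → ℝ) (ha : ‖a‖ < 1) :
    ∃! fα : C(Δ, ℝ), ∀ (i : Fin 3) (t : Δ),
      fα ⟨sgMap i ↑t, hmaps i t.2⟩ = f ⟨sgMap i ↑t, hmaps i t.2⟩ + a i * (fα t - b t) := by
  classical
  haveI hΔne : Nonempty Δ := hne.to_subtype
  set U : Fin 3 → Δ → Δ := fun i t => ⟨sgMap i t.1, hmaps i t.2⟩ with hUdef
  have contU : ∀ i, Continuous (U i) := by
    intro i
    apply Continuous.subtype_mk
    show Continuous fun t : Δ => (1/2 : ℝ) • ((t : ℝ × ℝ) + sgPt i)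
    exact (continuous_const (y := (1/2 : ℝ))).smul (continuous_subtype_val.add (continuous_const (y := sgPt i)))
  have injU : ∀ i, Function.Injective (U i) := by
    intro i t s h
    exact Subtype.ext (sgMap_inj i (congrArg Subtype.val h))
  have key : ∀ x : Δ, ∃ (i : Fin 3) (t : Δ), U i t = x := by
    intro x
    have hx1 : (x : ℝ × ℝ) ∈ ⋃ i, sgMap i '' Δ := hΔ ▸ x.2
    simp only [Set.mem_iUnion, Set.mem_image] at hx1
    obtain ⟨i, t, ht, hti⟩ := hx1
    exact ⟨i, ⟨t, ht⟩, Subtype.ext hti⟩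
  set vtx : Fin 3 → Δ := fun i => ⟨sgPt i, hx i⟩ with hvdef
  have hvfix : ∀ i, U i (vtx i) = vtx i := fun i => Subtype.ext (sgMap_fix i)
  have olap : ∀ (i j : Fin 3) (t s : Δ), U i t = U j s →
      (i = j ∧ t = s) ∨ (t = vtx j ∧ s = vtx i) := by
    intro i j t s h
    by_cases hij : i = j
    · subst hij
      exact Or.inl ⟨rfl, injU i h⟩
    · obtain ⟨h1, h2⟩ := sg_overlap Δ hne hΔ i j t.1 s.1 t.2 s.2 hij (congrArg Subtype.val h)
      exact Or.inr ⟨Subtype.ext h1, Subtype.ext h2⟩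
  set eb : C(Δ, ℝ) := f - b with hebdef
  have heb : ∀ i, eb (vtx i) = 0 := by
    intro i
    simp only [hebdef, ContinuousMap.sub_apply]
    rw [hfb i]
    ring
  have key2 := key
  choose ix tx hUx using key2
  set Φ : (Δ → ℝ) → Δ → ℝ := fun g x => a (ix x) * (g (tx x) + eb (tx x)) with hΦdef
  have wd : ∀ (g : Δ → ℝ), (∀ i, g (vtx i) = 0) →
      ∀ (i : Fin 3) (t : Δ), Φ g (U i t) = a i * (g t + eb t) := by
    intro g hg i t
    have h := hUx (U i t)
    rcases olap _ _ _ _ h with ⟨hi, ht'⟩ | ⟨h1, h2⟩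
    · simp only [hΦdef]
      rw [hi, ht']
    · simp only [hΦdef]
      rw [h1, h2, hg, hg, heb, heb]
      ring
  have cont : ∀ g : C(Δ, ℝ), (∀ i, g (vtx i) = 0) → Continuous (Φ g) := by
    intro g hg
    have hwd := wd g hg
    refine (locallyFinite_of_finite (fun i => Set.range (U i))).continuous ?_ ?_ ?_
    · ext x
      simp only [Set.mem_iUnion, Set.mem_range, Set.mem_univ, iff_true]
      obtain ⟨i, t, h⟩ := key x
      exact ⟨i, t, h⟩
    · intro i
      exact (isCompact_range (contU i)).isClosed
    · intro i
      rw [continuousOn_iff_continuous_restrict]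
      have hemb := ((contU i).isClosedEmbedding (injU i)).toIsEmbedding
      set e' := hemb.toHomeomorph with he'
      have hrestr : (Set.range (U i)).restrict (Φ g)
          = (fun t : Δ => a i * (g t + eb t)) ∘ e'.symm := by
        funext x
        have hx2 : U i (e'.symm x) = (x : Δ) := congrArg Subtype.val (e'.apply_symm_apply x)
        calc (Set.range (U i)).restrict (Φ g) x = Φ g (x : Δ) := rfl
          _ = Φ g (U i (e'.symm x)) := by rw [hx2]
          _ = a i * (g (e'.symm x) + eb (e'.symm x)) := hwd _ _
      change Continuous ((Set.range (U i)).restrict (Φ g))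
      rw [hrestr]
      exact (continuous_const.mul ((map_continuous g).add (map_continuous eb))).comp
        e'.symm.continuous
  set XS : Set C(Δ, ℝ) := {g | ∀ i, g (vtx i) = 0} with hXSdef
  have hXSc : IsClosed XS := by
    have : XS = ⋂ i, (fun g : C(Δ, ℝ) => g (vtx i)) ⁻¹' {0} := by
      ext g
      simp [hXSdef, Set.mem_iInter]
    rw [this]
    exact isClosed_iInter fun i =>
      isClosed_singleton.preimage (continuous_eval_const _)
  haveI : CompleteSpace XS := hXSc.completeSpace_coe
  haveI : Nonempty XS := ⟨⟨0, fun i => rfl⟩⟩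
  have hTmem : ∀ g : XS, (⟨Φ g.1, cont g.1 g.2⟩ : C(Δ, ℝ)) ∈ XS := by
    intro g i
    show Φ g.1 (vtx i) = 0
    have h1 : Φ g.1 (U i (vtx i)) = a i * (g.1 (vtx i) + eb (vtx i)) := wd g.1 g.2 i (vtx i)
    rw [hvfix i] at h1
    rw [h1, g.2 i, heb i]
    ring
  set T : XS → XS := fun g => ⟨⟨Φ g.1, cont g.1 g.2⟩, hTmem g⟩ with hTdef
  have hna : ‖a‖₊ < 1 := by
    rw [← coe_nnnorm] at ha
    exact_mod_cast ha
  have hL : LipschitzWith ‖a‖₊ T := by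
    apply LipschitzWith.of_dist_le_mul
    intro g g'
    simp only [Subtype.dist_eq]
    have h0 : (0:ℝ) ≤ (‖a‖₊ : ℝ) * dist g.1 g'.1 :=
      mul_nonneg (NNReal.coe_nonneg _) dist_nonneg
    rw [ContinuousMap.dist_le h0]
    intro x
    obtain ⟨i, t, rfl⟩ := key x
    show dist (Φ g.1 (U i t)) (Φ g'.1 (U i t)) ≤ _
    rw [wd g.1 g.2 i t, wd g'.1 g'.2 i t, Real.dist_eq]
    have hre : a i * (g.1 t + eb t) - a i * (g'.1 t + eb t) = a i * (g.1 t - g'.1 t) := by ring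
    rw [hre, abs_mul]
    have h1 : |a i| ≤ ‖a‖ := by simpa using norm_le_pi_norm a i
    have h2 : |g.1 t - g'.1 t| ≤ dist g.1 g'.1 := by
      rw [← Real.dist_eq]
      exact ContinuousMap.dist_apply_le_dist t
    calc |a i| * |g.1 t - g'.1 t| ≤ ‖a‖ * dist g.1 g'.1 :=
          mul_le_mul h1 h2 (abs_nonneg _) (norm_nonneg a)
      _ = (‖a‖₊ : ℝ) * dist g.1 g'.1 := by rw [coe_nnnorm]
  have hC : ContractingWith ‖a‖₊ T := ⟨hna, hL⟩
  set g₀ : XS := hC.fixedPoint T with hg₀def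
  have hfix : T g₀ = g₀ := hC.fixedPoint_isFixedPt
  have geq : ∀ (i : Fin 3) (t : Δ), g₀.1 (U i t) = a i * (g₀.1 t + eb t) := by
    intro i t
    have h1 : (T g₀).1 (U i t) = a i * (g₀.1 t + eb t) := wd g₀.1.1 g₀.2 i t
    rw [hfix] at h1
    exact h1
  refine ⟨f + g₀.1, ?_, ?_⟩
  · intro i t
    show (f + g₀.1) (U i t) = f (U i t) + a i * ((f + g₀.1) t - b t)
    simp only [ContinuousMap.add_apply]
    rw [geq i t]
    have : eb t = f t - b t := by simp [hebdef]
    rw [this]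
    ring
  · intro fβ hfβ
    have hsub : ∀ (i : Fin 3) (t : Δ),
        (fβ - (f + g₀.1)) (U i t) = a i * ((fβ - (f + g₀.1)) t) := by
      intro i t
      have h1 := hfβ i t
      have h2 : g₀.1 (U i t) = a i * (g₀.1 t + eb t) := geq i t
      have h3 : eb t = f t - b t := by simp [hebdef]
      simp only [ContinuousMap.sub_apply, ContinuousMap.add_apply]
      have h1' : fβ (U i t) = f (U i t) + a i * (fβ t - b t) := h1
      rw [h1', h2, h3]
      ring
    set h : C(Δ, ℝ) := fβ - (f + g₀.1) with hhdef
    have hnorm : ‖h‖ ≤ ‖a‖ * ‖h‖ := by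
      have h0 : (0:ℝ) ≤ ‖a‖ * ‖h‖ := mul_nonneg (norm_nonneg a) (norm_nonneg h)
      rw [ContinuousMap.norm_le _ h0]
      intro x
      obtain ⟨i, t, rfl⟩ := key x
      rw [hsub i t]
      have h1 : |a i| ≤ ‖a‖ := by simpa using norm_le_pi_norm a i
      have h2 : ‖h t‖ ≤ ‖h‖ := ContinuousMap.norm_coe_le_norm h t
      calc ‖a i * h t‖ = |a i| * ‖h t‖ := by rw [norm_mul]; rfl
        _ ≤ ‖a‖ * ‖h‖ := mul_le_mul h1 h2 (norm_nonneg _) (norm_nonneg a)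
    have hz : ‖h‖ = 0 := by nlinarith [norm_nonneg h]
    have : h = 0 := norm_eq_zero.mp hz
    exact sub_eq_zero.mp this
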